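/- arXiv:quant-ph/0201013 — 2 statements merged into one kernel-verified Lean document; each statement's English description precedes it below -/
import Mathlib

section
/- For any unit vector ψ of the n-fold tensor power of ℂ² and any unit vector φ of the m-fold tensor power of ℂ²: Prob(OR(ψ, φ)) = Prob(ψ) + Prob(φ) − Prob(ψ) · Prob(φ). -/
open Complex Finset

noncomputable section

/-- The `n`-fold tensor power of `ℂ²`, identified with `EuclideanSpace ℂ (Fin (2^n))`. -/
abbrev QReg (n : ℕ) := EuclideanSpace ℂ (Fin (2 ^ n))

/-- Flip the last bit of a binary index. -/
def flipIdx {N : ℕ} (j : Fin N) : Fin N :=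
  ⟨(j.val ^^^ 1) % N, Nat.mod_lt _ j.pos⟩

/-- The gate `NOT⁽ⁿ⁾`: flips the last bit of each basis label, i.e. swaps the
coordinates `a_{2k}` and `a_{2k+1}`. -/
def NOTg (n : ℕ) (ψ : QReg n) : QReg n := WithLp.toLp 2 fun j => ψ (flipIdx j)

/-- The gate `√NOT⁽ⁿ⁾`: replaces each coordinate pair `(a_{2k}, a_{2k+1})` by
`(½(1+i)a_{2k} + ½(1−i)a_{2k+1}, ½(1−i)a_{2k} + ½(1+i)a_{2k+1})`. -/
def sqNOTg (n : ℕ) (ψ : QReg n) : QReg n := WithLp.toLp 2 fun j =>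
  if j.val % 2 = 0 then
    (1 + Complex.I) / 2 * ψ j + (1 - Complex.I) / 2 * ψ (flipIdx j)
  else
    (1 - Complex.I) / 2 * ψ (flipIdx j) + (1 + Complex.I) / 2 * ψ j

/-- Action of the Toffoli gate `T⁽ⁿ'ᵐ'¹⁾` on basis indices: if the bits `xₙ`
(weight `2^(m+1)`) and `y_m` (weight `2`) are both `1`, flip the last bit `z`. -/
def toffIdx (n m : ℕ) (j : Fin (2 ^ (n + m + 1))) : Fin (2 ^ (n + m + 1)) :=
  if (j.val / 2 ^ (m + 1)) % 2 = 1 ∧ (j.val / 2) % 2 = 1 then flipIdx j else j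

/-- The Toffoli gate `T⁽ⁿ'ᵐ'¹⁾`. -/
def Tg (n m : ℕ) (ψ : QReg (n + m + 1)) : QReg (n + m + 1) := WithLp.toLp 2 fun j => ψ (toffIdx n m j)

/-- Tensor product of coefficient vectors: `(ψ ⊗ φ)_{2^m·j + k} = ψ_j · φ_k`. -/
def tensor {n m : ℕ} (ψ : QReg n) (φ : QReg m) : QReg (n + m) := WithLp.toLp 2 fun j =>
  ψ ⟨j.val / 2 ^ m, by
        have h : (j : ℕ) < 2 ^ n * 2 ^ m :=
          lt_of_lt_of_le j.isLt (le_of_eq (pow_add 2 n m))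
        exact (Nat.div_lt_iff_lt_mul (Nat.two_pow_pos m)).mpr h⟩ *
  φ ⟨j.val % 2 ^ m, Nat.mod_lt _ (Nat.two_pow_pos m)⟩

/-- The bit `|0⟩ = e₀ ∈ ℂ²`. -/
def ket0 : QReg 1 := WithLp.toLp 2 fun j => if j.val = 0 then 1 else 0

/-- `AND(ψ, φ) := T⁽ⁿ'ᵐ'¹⁾(ψ ⊗ φ ⊗ |0⟩)`. -/
def ANDg (n m : ℕ) (ψ : QReg n) (φ : QReg m) : QReg (n + m + 1) :=
  Tg n m (tensor (tensor ψ φ) ket0)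

/-- `OR(ψ, φ) := NOT(AND(NOT ψ, NOT φ))`. -/
def ORg (n m : ℕ) (ψ : QReg n) (φ : QReg m) : QReg (n + m + 1) :=
  NOTg (n + m + 1) (ANDg n m (NOTg n ψ) (NOTg m φ))

/-- The probability-value of a vector: the sum of `‖a_j‖²` over the odd indices `j`
(those whose basis label ends with the bit `1`). -/
def Prob {n : ℕ} (ψ : QReg n) : ℝ :=
  ∑ j ∈ Finset.univ.filter (fun j : Fin (2 ^ n) => j.val % 2 = 1), ‖ψ j‖ ^ 2

/-! ### Auxiliary lemmas -/

lemma xor1_even {j : ℕ} (h : j % 2 = 0) : j ^^^ 1 = j + 1 := by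
  obtain ⟨q, rfl⟩ : ∃ q, j = 2 * q := ⟨j / 2, by omega⟩
  have := Nat.xor_bit false q true 0
  simpa [Nat.bit] using this

lemma xor1_odd {j : ℕ} (h : j % 2 = 1) : j ^^^ 1 = j - 1 := by
  obtain ⟨q, rfl⟩ : ∃ q, j = 2 * q + 1 := ⟨j / 2, by omega⟩
  have := Nat.xor_bit true q true 0
  simpa [Nat.bit] using this

lemma xor1_lt {k j : ℕ} (hk : 1 ≤ k) (hj : j < 2 ^ k) : j ^^^ 1 < 2 ^ k := by
  have h2 : (2 : ℕ) ^ k % 2 = 0 := by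
    have : (2 : ℕ) ∣ 2 ^ k := dvd_pow_self 2 (by omega)
    omega
  rcases Nat.mod_two_eq_zero_or_one j with h | h
  · rw [xor1_even h]; omega
  · rw [xor1_odd h]; omega

lemma xor1_div_two (j : ℕ) : (j ^^^ 1) / 2 = j / 2 := by
  rcases Nat.mod_two_eq_zero_or_one j with h | h
  · rw [xor1_even h]; omega
  · rw [xor1_odd h]; omega

lemma xor1_mod_two (j : ℕ) : (j ^^^ 1) % 2 = 1 - j % 2 := by
  rcases Nat.mod_two_eq_zero_or_one j with h | h
  · rw [xor1_even h]; omega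
  · rw [xor1_odd h]; omega

lemma flipIdx_val {k : ℕ} (hk : 1 ≤ k) (j : Fin (2 ^ k)) :
    (flipIdx j).val = j.val ^^^ 1 := by
  simp [flipIdx, Nat.mod_eq_of_lt (xor1_lt hk j.isLt)]

lemma flipIdx_flipIdx {k : ℕ} (hk : 1 ≤ k) (j : Fin (2 ^ k)) :
    flipIdx (flipIdx j) = j := by
  apply Fin.ext
  rw [flipIdx_val hk, flipIdx_val hk, Nat.xor_xor_cancel_right]

lemma div_pow_succ (j m : ℕ) : j / 2 ^ (m + 1) = (j / 2) / 2 ^ m := by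
  rw [Nat.div_div_eq_div_mul, pow_succ']

/-- The higher part of a decomposed index. -/
def hiIdx {n m : ℕ} (j : Fin (2 ^ (n + m))) : Fin (2 ^ n) :=
  ⟨j.val / 2 ^ m, by
      have h : (j : ℕ) < 2 ^ n * 2 ^ m :=
        lt_of_lt_of_le j.isLt (le_of_eq (pow_add 2 n m))
      exact (Nat.div_lt_iff_lt_mul (Nat.two_pow_pos m)).mpr h⟩

/-- The lower part of a decomposed index. -/
def loIdx {n m : ℕ} (j : Fin (2 ^ (n + m))) : Fin (2 ^ m) :=
  ⟨j.val % 2 ^ m, Nat.mod_lt _ (Nat.two_pow_pos m)⟩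

lemma tensor_apply {n m : ℕ} (ψ : QReg n) (φ : QReg m) (j : Fin (2 ^ (n + m))) :
    tensor ψ φ j = ψ (hiIdx j) * φ (loIdx j) := rfl

/-- Half of an index in `Fin (2^(k+1))`. -/
def halfIdx {k : ℕ} (j : Fin (2 ^ (k + 1))) : Fin (2 ^ k) :=
  ⟨j.val / 2, by
      have h := j.isLt
      have h2 : (2 : ℕ) ^ (k + 1) = 2 ^ k * 2 := pow_succ 2 k
      omega⟩

lemma decomp_lt {n m a b : ℕ} (ha : a < 2 ^ n) (hb : b < 2 ^ m) :
    2 ^ m * a + b < 2 ^ (n + m) := by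
  calc 2 ^ m * a + b < 2 ^ m * a + 2 ^ m := by omega
    _ = 2 ^ m * (a + 1) := by ring
    _ ≤ 2 ^ m * 2 ^ n := Nat.mul_le_mul_left _ (by omega)
    _ = 2 ^ (n + m) := by rw [pow_add]; ring

lemma decomp_div {m a b : ℕ} (hb : b < 2 ^ m) : (2 ^ m * a + b) / 2 ^ m = a := by
  rw [Nat.mul_add_div (Nat.two_pow_pos m), Nat.div_eq_of_lt hb, Nat.add_zero]

lemma decomp_mod {m a b : ℕ} (hb : b < 2 ^ m) : (2 ^ m * a + b) % 2 ^ m = b := by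
  rw [Nat.mul_add_mod, Nat.mod_eq_of_lt hb]

lemma sum_sq_eq_one {k : ℕ} {χ : QReg k} (h : ‖χ‖ = 1) :
    ∑ j, ‖χ j‖ ^ 2 = 1 := by
  have h1 := EuclideanSpace.norm_eq χ
  rw [h] at h1
  exact Real.sqrt_eq_one.mp h1.symm

lemma Prob_NOT {k : ℕ} (hk : 1 ≤ k) (χ : QReg k) :
    Prob (NOTg k χ) = (∑ j, ‖χ j‖ ^ 2) - Prob χ := by
  have key : Prob (NOTg k χ) =
      ∑ j ∈ Finset.univ.filter (fun j : Fin (2 ^ k) => ¬ j.val % 2 = 1), ‖χ j‖ ^ 2 := by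
    refine Finset.sum_nbij' (i := flipIdx) (j := flipIdx) ?_ ?_ ?_ ?_ ?_
    · intro a ha
      simp only [Finset.mem_filter, Finset.mem_univ, true_and] at ha ⊢
      rw [flipIdx_val hk, xor1_mod_two, ha]
      omega
    · intro a ha
      simp only [Finset.mem_filter, Finset.mem_univ, true_and] at ha ⊢
      rw [flipIdx_val hk, xor1_mod_two]
      omega
    · intro a _; exact flipIdx_flipIdx hk a
    · intro a _; exact flipIdx_flipIdx hk a
    · intro a _; rfl
  rw [key, eq_sub_iff_add_eq, add_comm]
  exact Finset.sum_filter_add_sum_filter_not _ _ _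

lemma sum_sq_NOT {k : ℕ} (hk : 1 ≤ k) (χ : QReg k) :
    ∑ j, ‖NOTg k χ j‖ ^ 2 = ∑ j, ‖χ j‖ ^ 2 := by
  refine Finset.sum_nbij' (i := flipIdx) (j := flipIdx) ?_ ?_ ?_ ?_ ?_ <;>
    simp [flipIdx_flipIdx hk, NOTg]

lemma toffIdx_toffIdx (n m : ℕ) (j : Fin (2 ^ (n + m + 1))) :
    toffIdx n m (toffIdx n m j) = j := by
  have hk : 1 ≤ n + m + 1 := by omega
  unfold toffIdx
  by_cases h : ((j : ℕ) / 2 ^ (m + 1)) % 2 = 1 ∧ ((j : ℕ) / 2) % 2 = 1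
  · rw [if_pos h]
    have hval : (flipIdx j).val = j.val ^^^ 1 := flipIdx_val hk j
    have h1 : ((flipIdx j).val) / 2 = (j : ℕ) / 2 := by rw [hval, xor1_div_two]
    have h2 : ((flipIdx j).val) / 2 ^ (m + 1) = (j : ℕ) / 2 ^ (m + 1) := by
      rw [div_pow_succ, div_pow_succ, hval, xor1_div_two]
    rw [if_pos (by rw [h1, h2]; exact h)]
    exact flipIdx_flipIdx hk j
  · rw [if_neg h, if_neg h]

lemma sum_sq_Tg (n m : ℕ) (χ : QReg (n + m + 1)) :
    ∑ j, ‖Tg n m χ j‖ ^ 2 = ∑ j, ‖χ j‖ ^ 2 := by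
  refine Finset.sum_nbij' (i := toffIdx n m) (j := toffIdx n m) ?_ ?_ ?_ ?_ ?_ <;>
    simp [toffIdx_toffIdx, Tg]

lemma sum_sq_tensor {n m : ℕ} (ψ : QReg n) (φ : QReg m) :
    ∑ j, ‖tensor ψ φ j‖ ^ 2 = (∑ a, ‖ψ a‖ ^ 2) * (∑ b, ‖φ b‖ ^ 2) := by
  rw [Finset.sum_mul_sum, ← Finset.sum_product']
  refine Finset.sum_nbij' (i := fun j => (hiIdx j, loIdx j))
    (j := fun p => ⟨2 ^ m * p.1.val + p.2.val, decomp_lt p.1.isLt p.2.isLt⟩)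
    ?_ ?_ ?_ ?_ ?_
  · intro a _; simp
  · intro a _; simp
  · intro a _
    apply Fin.ext
    show 2 ^ m * (a.val / 2 ^ m) + a.val % 2 ^ m = a.val
    exact Nat.div_add_mod _ _
  · intro a _
    have hb := a.2.isLt
    refine Prod.ext ?_ ?_
    · apply Fin.ext
      show (2 ^ m * a.1.val + a.2.val) / 2 ^ m = a.1.val
      exact decomp_div hb
    · apply Fin.ext
      show (2 ^ m * a.1.val + a.2.val) % 2 ^ m = a.2.val
      exact decomp_mod hb
  · intro a _
    rw [tensor_apply]
    simp [norm_mul, mul_pow]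

lemma sum_sq_ket0 : ∑ j, ‖ket0 j‖ ^ 2 = 1 := by
  rw [← Equiv.sum_comp (finCongr (show 2 = 2 ^ 1 by norm_num)) (fun j => ‖ket0 j‖ ^ 2)]
  rw [Fin.sum_univ_two]
  simp [ket0]

lemma tensor_ket0_even {k : ℕ} (χ : QReg k) (j : Fin (2 ^ (k + 1))) (h : j.val % 2 = 0) :
    tensor χ ket0 j = χ (halfIdx j) := by
  rw [tensor_apply]
  have h1 : (loIdx j : Fin (2 ^ 1)).val = 0 := by
    simp only [loIdx, pow_one]; exact h
  have h2 : ket0 (loIdx j) = 1 := by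
    show (if (loIdx j).val = 0 then (1:ℂ) else 0) = 1; rw [if_pos h1]
  rw [h2, mul_one]
  exact congrArg χ (Fin.ext (by show j.val / 2 ^ 1 = j.val / 2; rw [pow_one]))

lemma tensor_ket0_odd {k : ℕ} (χ : QReg k) (j : Fin (2 ^ (k + 1))) (h : j.val % 2 = 1) :
    tensor χ ket0 j = 0 := by
  rw [tensor_apply]
  have h1 : (loIdx j : Fin (2 ^ 1)).val = 1 := by
    simp only [loIdx, pow_one]; exact h
  have h2 : ket0 (loIdx j) = 0 := by
    show (if (loIdx j).val = 0 then (1:ℂ) else 0) = 0; rw [if_neg (by rw [h1]; norm_num)]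
  rw [h2, mul_zero]

lemma AND_val {n m : ℕ} (hm : 1 ≤ m) (ψ : QReg n) (φ : QReg m)
    (j : Fin (2 ^ (n + m + 1))) (hj : j.val % 2 = 1) :
    ANDg n m ψ φ j =
      if ((halfIdx j).val / 2 ^ m) % 2 = 1 ∧ ((halfIdx j).val % 2 ^ m) % 2 = 1
      then ψ (hiIdx (halfIdx j)) * φ (loIdx (halfIdx j)) else 0 := by
  have hk : 1 ≤ n + m + 1 := by omega
  have hdvd : (2 : ℕ) ∣ 2 ^ m := dvd_pow_self 2 (by omega)
  have hmod : (halfIdx j).val % 2 = ((halfIdx j).val % 2 ^ m) % 2 :=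
    (Nat.mod_mod_of_dvd _ hdvd).symm
  have hhalf : (halfIdx j).val = j.val / 2 := rfl
  have hcond : ((j : ℕ) / 2 ^ (m + 1)) % 2 = 1 ∧ ((j : ℕ) / 2) % 2 = 1 ↔
      ((halfIdx j).val / 2 ^ m) % 2 = 1 ∧ ((halfIdx j).val % 2 ^ m) % 2 = 1 := by
    rw [div_pow_succ, ← hhalf, ← hmod]
  show Tg n m (tensor (tensor ψ φ) ket0) j = _
  unfold Tg toffIdx
  simp only [WithLp.ofLp_toLp]
  by_cases h : ((halfIdx j).val / 2 ^ m) % 2 = 1 ∧ ((halfIdx j).val % 2 ^ m) % 2 = 1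
  · rw [if_pos (hcond.mpr h), if_pos h]
    have hfv : (flipIdx j).val = j.val ^^^ 1 := flipIdx_val hk j
    have hfe : (flipIdx j).val % 2 = 0 := by rw [hfv, xor1_mod_two, hj]
    rw [tensor_ket0_even _ _ hfe]
    have : halfIdx (flipIdx j) = halfIdx j := by
      apply Fin.ext
      show (flipIdx j).val / 2 = j.val / 2
      rw [hfv, xor1_div_two]
    rw [this, tensor_apply]
  · rw [if_neg (fun hc => h (hcond.mp hc)), tensor_ket0_odd _ _ hj, if_neg h]

lemma Prob_AND {n m : ℕ} (hm : 1 ≤ m) (ψ : QReg n) (φ : QReg m) :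
    Prob (ANDg n m ψ φ) = Prob ψ * Prob φ := by
  classical
  have step1 : Prob (ANDg n m ψ φ) =
      ∑ j ∈ Finset.univ.filter (fun j : Fin (2 ^ (n + m + 1)) => j.val % 2 = 1),
        (if ((halfIdx j).val / 2 ^ m) % 2 = 1 ∧ ((halfIdx j).val % 2 ^ m) % 2 = 1
         then ‖ψ (hiIdx (halfIdx j))‖ ^ 2 * ‖φ (loIdx (halfIdx j))‖ ^ 2 else 0) := by
    refine Finset.sum_congr rfl fun j hj => ?_
    simp only [Finset.mem_filter, Finset.mem_univ, true_and] at hj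
    rw [AND_val hm ψ φ j hj]
    split
    · rw [norm_mul, mul_pow]
    · simp
  rw [step1, ← Finset.sum_filter, Finset.filter_filter]
  rw [Prob, Prob, Finset.sum_mul_sum, ← Finset.sum_product']
  refine Finset.sum_nbij' (i := fun j => (hiIdx (halfIdx j), loIdx (halfIdx j)))
    (j := fun p => ⟨2 * (2 ^ m * p.1.val + p.2.val) + 1, by
        have h := decomp_lt p.1.isLt p.2.isLt
        have h2 : (2 : ℕ) ^ (n + m + 1) = 2 ^ (n + m) * 2 := pow_succ 2 (n + m)
        omega⟩)
    ?_ ?_ ?_ ?_ ?_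
  · intro a ha
    simp only [Finset.mem_filter, Finset.mem_univ, true_and] at ha
    simp only [Finset.mem_product, Finset.mem_filter, Finset.mem_univ, true_and]
    exact ha.2
  · intro p hp
    simp only [Finset.mem_product, Finset.mem_filter, Finset.mem_univ, true_and] at hp
    simp only [Finset.mem_filter, Finset.mem_univ, true_and]
    have hb := p.2.isLt
    refine ⟨?_, ?_⟩
    · show (2 * (2 ^ m * p.1.val + p.2.val) + 1) % 2 = 1
      omega
    · show ((2 * (2 ^ m * p.1.val + p.2.val) + 1) / 2) / 2 ^ m % 2 = 1 ∧
        ((2 * (2 ^ m * p.1.val + p.2.val) + 1) / 2) % 2 ^ m % 2 = 1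
      rw [show (2 * (2 ^ m * p.1.val + p.2.val) + 1) / 2 = 2 ^ m * p.1.val + p.2.val
          by omega, decomp_div hb, decomp_mod hb]
      exact ⟨hp.1, hp.2⟩
  · intro j hj
    simp only [Finset.mem_filter, Finset.mem_univ, true_and] at hj
    apply Fin.ext
    show 2 * (2 ^ m * ((halfIdx j).val / 2 ^ m) + (halfIdx j).val % 2 ^ m) + 1 = j.val
    rw [Nat.div_add_mod]
    show 2 * (j.val / 2) + 1 = j.val
    omega
  · intro p hp
    have hb := p.2.isLt
    have key : (2 * (2 ^ m * p.1.val + p.2.val) + 1) / 2 = 2 ^ m * p.1.val + p.2.val := by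
      omega
    refine Prod.ext ?_ ?_
    · apply Fin.ext
      show ((2 * (2 ^ m * p.1.val + p.2.val) + 1) / 2) / 2 ^ m = p.1.val
      rw [key, decomp_div hb]
    · apply Fin.ext
      show ((2 * (2 ^ m * p.1.val + p.2.val) + 1) / 2) % 2 ^ m = p.2.val
      rw [key, decomp_mod hb]
  · intro j _; rfl

theorem stmt9 (n m : ℕ) (hn : 1 ≤ n) (hm : 1 ≤ m) (ψ : QReg n) (φ : QReg m)
    (hψ : ‖ψ‖ = 1) (hφ : ‖φ‖ = 1) :
    Prob (ORg n m ψ φ) = Prob ψ + Prob φ - Prob ψ * Prob φ := by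
  have hk : 1 ≤ n + m + 1 := by omega
  have hψs : ∑ j, ‖ψ j‖ ^ 2 = 1 := sum_sq_eq_one hψ
  have hφs : ∑ j, ‖φ j‖ ^ 2 = 1 := sum_sq_eq_one hφ
  have hTA : ∑ j, ‖ANDg n m (NOTg n ψ) (NOTg m φ) j‖ ^ 2 = 1 := by
    rw [ANDg, sum_sq_Tg, sum_sq_tensor, sum_sq_tensor, sum_sq_ket0,
        sum_sq_NOT hn, sum_sq_NOT hm, hψs, hφs]
    ring
  rw [ORg, Prob_NOT hk, hTA, Prob_AND hm, Prob_NOT hn, Prob_NOT hm, hψs, hφs]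
  ring

end
end

section
/- For any unit vector ψ of the n-fold tensor power of ℂ² and any unit vector φ of the m-fold tensor power of ℂ²: Prob(√NOT^(n+m+1)(AND(ψ, φ))) = 1/2. -/
open Complex Finset

noncomputable section

lemma xor_one_eq (j : ℕ) : j ^^^ 1 = 2 * (j / 2) + (1 - j % 2) := by
  have h1 : (1:ℕ) = Nat.bit true 0 := rfl
  have h2 : j = Nat.bit (j % 2 = 1) (j / 2) := by
    rw [Nat.bit_val]; rcases Nat.even_or_odd j with h | h <;>
      simp [Nat.even_iff, Nat.odd_iff] at h <;> simp [h] <;> omega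
  conv_lhs => rw [h2, h1]
  rw [Nat.xor_bit, Nat.bit_val]
  rcases Nat.even_or_odd j with h | h <;> simp [Nat.even_iff, Nat.odd_iff] at h <;> simp [h]

lemma flip_val {N : ℕ} (hN : N % 2 = 0) (j : Fin N) :
    (flipIdx j).val = 2 * (j.val / 2) + (1 - j.val % 2) := by
  have hj := j.isLt
  simp only [flipIdx, xor_one_eq]
  rw [Nat.mod_eq_of_lt (by omega)]

lemma flipIdx_flip_flip {N : ℕ} (hN : N % 2 = 0) (j : Fin N) : flipIdx (flipIdx j) = j := by
  have h1 := flip_val hN j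
  have h2 := flip_val hN (flipIdx j)
  apply Fin.ext
  omega

lemma flip_mod {N : ℕ} (hN : N % 2 = 0) (j : Fin N) :
    (flipIdx j).val % 2 = 1 - j.val % 2 := by
  have := flip_val hN j; omega

lemma flip_div {N : ℕ} (hN : N % 2 = 0) (j : Fin N) :
    (flipIdx j).val / 2 = j.val / 2 := by
  have := flip_val hN j; omega

lemma pow_mod_two (n m : ℕ) : 2 ^ (n + m + 1) % 2 = 0 := by
  simp [pow_succ, Nat.mul_mod]

lemma toff_cond_flip (n m : ℕ) (j : Fin (2 ^ (n + m + 1))) :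
    (((flipIdx j).val / 2 ^ (m + 1)) % 2 = 1 ∧ ((flipIdx j).val / 2) % 2 = 1) ↔
      ((j.val / 2 ^ (m + 1)) % 2 = 1 ∧ (j.val / 2) % 2 = 1) := by
  have hd := flip_div (pow_mod_two n m) j
  have key : ∀ a : ℕ, a / 2 ^ (m + 1) = a / 2 / 2 ^ m := by
    intro a
    rw [Nat.div_div_eq_div_mul]
    congr 1
    rw [pow_succ]
    ring
  have h1 : (flipIdx j).val / 2 ^ (m + 1) = j.val / 2 ^ (m + 1) := by
    rw [key, key, hd]
  rw [h1, hd]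

lemma toff_invol (n m : ℕ) : Function.Involutive (toffIdx n m) := by
  intro j
  unfold toffIdx
  by_cases h : (j.val / 2 ^ (m + 1)) % 2 = 1 ∧ (j.val / 2) % 2 = 1
  · rw [if_pos h, if_pos ((toff_cond_flip n m j).mpr h), flipIdx_flip_flip (pow_mod_two n m)]
  · rw [if_neg h, if_neg h]

lemma half_normsq (a : ℂ) : ‖(1 - Complex.I) / 2 * a‖ ^ 2 = ‖a‖ ^ 2 / 2 ∧
    ‖(1 + Complex.I) / 2 * a‖ ^ 2 = ‖a‖ ^ 2 / 2 := by
  constructor <;>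
  · rw [norm_mul, mul_pow]
    have : ‖(1 - Complex.I) / 2‖ ^ 2 = 1 / 2 ∧ ‖(1 + Complex.I) / 2‖ ^ 2 = 1 / 2 := by
      constructor <;>
      · rw [Complex.sq_norm]
        simp [Complex.normSq_apply]
        norm_num
    rcases this with ⟨h1, h2⟩
    first
      | rw [h1]; ring
      | rw [h2]; ring

-- sum of squared norms of a tensor product
def splitEquiv (n m : ℕ) : Fin (2 ^ n) × Fin (2 ^ m) ≃ Fin (2 ^ (n + m)) where
  toFun := fun p => ⟨2 ^ m * p.1.val + p.2.val, by
    calc 2 ^ m * p.1.val + p.2.val < 2 ^ m * p.1.val + 2 ^ m :=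
          Nat.add_lt_add_left p.2.isLt _
      _ = 2 ^ m * (p.1.val + 1) := by ring
      _ ≤ 2 ^ m * 2 ^ n := Nat.mul_le_mul_left _ p.1.isLt
      _ = 2 ^ (n + m) := by rw [pow_add]; ring⟩
  invFun := fun j => (⟨j.val / 2 ^ m, by
      have h : (j : ℕ) < 2 ^ n * 2 ^ m := lt_of_lt_of_le j.isLt (le_of_eq (pow_add 2 n m))
      exact (Nat.div_lt_iff_lt_mul (Nat.two_pow_pos m)).mpr h⟩,
    ⟨j.val % 2 ^ m, Nat.mod_lt _ (Nat.two_pow_pos m)⟩)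
  left_inv := by
    rintro ⟨x, y⟩
    have hy := y.isLt
    have h2 : (2 ^ m * x.val + y.val) / 2 ^ m = x.val := by
      rw [Nat.mul_add_div (Nat.two_pow_pos m), Nat.div_eq_of_lt hy, Nat.add_zero]
    have h3 : (2 ^ m * x.val + y.val) % 2 ^ m = y.val := by
      rw [Nat.mul_add_mod, Nat.mod_eq_of_lt hy]
    simp [h2, h3]
  right_inv := by
    intro j
    apply Fin.ext
    exact Nat.div_add_mod j.val (2 ^ m)

lemma tensor_sum_sq {n m : ℕ} (a : QReg n) (b : QReg m) :
    ∑ j : Fin (2 ^ (n + m)), ‖tensor a b j‖ ^ 2 =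
      (∑ i : Fin (2 ^ n), ‖a i‖ ^ 2) * (∑ i : Fin (2 ^ m), ‖b i‖ ^ 2) := by
  rw [← Equiv.sum_comp (splitEquiv n m) (fun j => ‖tensor a b j‖ ^ 2)]
  rw [Finset.sum_mul_sum, Fintype.sum_prod_type]
  apply Finset.sum_congr rfl
  intro x _
  apply Finset.sum_congr rfl
  intro y _
  have hy := y.isLt
  have h2 : (2 ^ m * x.val + y.val) / 2 ^ m = x.val := by
    rw [Nat.mul_add_div (Nat.two_pow_pos m), Nat.div_eq_of_lt hy, Nat.add_zero]
  have h3 : (2 ^ m * x.val + y.val) % 2 ^ m = y.val := by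
    rw [Nat.mul_add_mod, Nat.mod_eq_of_lt hy]
  simp only [tensor, splitEquiv, Equiv.coe_fn_mk, WithLp.ofLp_toLp, norm_mul, mul_pow, h2, h3]

lemma sum_sq_of_norm_one {n : ℕ} (ψ : QReg n) (h : ‖ψ‖ = 1) :
    ∑ i : Fin (2 ^ n), ‖ψ i‖ ^ 2 = 1 := by
  have := EuclideanSpace.norm_eq ψ
  rw [h] at this
  rw [← Real.sqrt_eq_one]
  exact this.symm

lemma ket0_sum : ∑ i : Fin (2 ^ 1), ‖ket0 i‖ ^ 2 = 1 := by
  show ∑ i : Fin 2, ‖ket0 i‖ ^ 2 = 1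
  rw [Fin.sum_univ_two]
  simp [ket0]

theorem stmt12 (n m : ℕ) (ψ : QReg n) (φ : QReg m) (hψ : ‖ψ‖ = 1) (hφ : ‖φ‖ = 1) :
    Prob (sqNOTg (n + m + 1) (ANDg n m ψ φ)) = 1 / 2 := by
  set K := n + m + 1 with hK
  have hNe : 2 ^ (n + m + 1) % 2 = 0 := pow_mod_two n m
  set w : QReg (n + m + 1) := tensor (tensor ψ φ) ket0 with hw
  set v : QReg (n + m + 1) := ANDg n m ψ φ with hv
  -- w vanishes on odd indices
  have hwodd : ∀ j : Fin (2 ^ (n + m + 1)), j.val % 2 = 1 → w j = 0 := by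
    intro j hj
    show tensor (tensor ψ φ) ket0 j = 0
    unfold tensor ket0
    simp only [pow_one, hj]
    simp
  -- v = w ∘ toffIdx
  have hvw : ∀ j, v j = w (toffIdx n m j) := fun j => rfl
  -- for each odd j, v j = 0 or v (flipIdx j) = 0
  have hpair : ∀ j : Fin (2 ^ (n + m + 1)), j.val % 2 = 1 → v j = 0 ∨ v (flipIdx j) = 0 := by
    intro j hj
    by_cases h : (j.val / 2 ^ (m + 1)) % 2 = 1 ∧ (j.val / 2) % 2 = 1
    · right
      rw [hvw]
      unfold toffIdx
      rw [if_pos ((toff_cond_flip n m j).mpr h), flipIdx_flip_flip hNe]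
      exact hwodd j hj
    · left
      rw [hvw]
      unfold toffIdx
      rw [if_neg h]
      exact hwodd j hj
  -- pointwise norm computation for odd j
  have hpt : ∀ j ∈ Finset.univ.filter (fun j : Fin (2 ^ (n + m + 1)) => j.val % 2 = 1),
      ‖sqNOTg (n + m + 1) v j‖ ^ 2 = (‖v j‖ ^ 2 + ‖v (flipIdx j)‖ ^ 2) / 2 := by
    intro j hj
    rw [Finset.mem_filter] at hj
    have hj1 := hj.2
    have hne : ¬ j.val % 2 = 0 := by omega
    unfold sqNOTg
    simp only [WithLp.ofLp_toLp]
    rw [if_neg hne]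
    rcases hpair j hj1 with h0 | h0
    · rw [h0]
      simp only [mul_zero, add_zero, norm_zero]
      have := (half_normsq (v (flipIdx j))).1
      rw [this]
      ring_nf
    · rw [h0]
      simp only [mul_zero, zero_add, norm_zero]
      have := (half_normsq (v j)).2
      rw [this]
      ring_nf
  -- total sum of squared norms of v is 1
  have htot : ∑ j : Fin (2 ^ (n + m + 1)), ‖v j‖ ^ 2 = 1 := by
    have hperm :
        ∑ j : Fin (2 ^ (n + m + 1)), ‖v j‖ ^ 2 = ∑ j : Fin (2 ^ (n + m + 1)), ‖w j‖ ^ 2 := by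
      calc ∑ j : Fin (2 ^ (n + m + 1)), ‖v j‖ ^ 2
          = ∑ j : Fin (2 ^ (n + m + 1)),
              ‖w (Function.Involutive.toPerm _ (toff_invol n m) j)‖ ^ 2 := rfl
        _ = ∑ j : Fin (2 ^ (n + m + 1)), ‖w j‖ ^ 2 :=
            Equiv.sum_comp (Function.Involutive.toPerm _ (toff_invol n m))
              (fun j => ‖w j‖ ^ 2)
    rw [hperm, hw]
    have h1 : ∑ j : Fin (2 ^ (n + m + 1)), ‖tensor (tensor ψ φ) ket0 j‖ ^ 2 =
        (∑ i : Fin (2 ^ (n + m)), ‖tensor ψ φ i‖ ^ 2) * (∑ i : Fin (2 ^ 1), ‖ket0 i‖ ^ 2) :=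
      tensor_sum_sq (tensor ψ φ) ket0
    rw [h1, tensor_sum_sq ψ φ, sum_sq_of_norm_one ψ hψ, sum_sq_of_norm_one φ hφ, ket0_sum]
    ring
  -- the flip bijection between odd and even indices
  have hbij : ∑ j ∈ Finset.univ.filter (fun j : Fin (2 ^ (n + m + 1)) => j.val % 2 = 1),
        ‖v (flipIdx j)‖ ^ 2
      = ∑ j ∈ Finset.univ.filter (fun j : Fin (2 ^ (n + m + 1)) => ¬ j.val % 2 = 1),
        ‖v j‖ ^ 2 := by
    apply Finset.sum_nbij' (i := fun j => flipIdx j) (j := fun j => flipIdx j)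
    · intro a ha
      rw [Finset.mem_filter] at ha ⊢
      refine ⟨Finset.mem_univ _, ?_⟩
      have := flip_mod hNe a
      omega
    · intro a ha
      rw [Finset.mem_filter] at ha ⊢
      refine ⟨Finset.mem_univ _, ?_⟩
      have := flip_mod hNe a
      have ha2 := a.isLt
      omega
    · intro a _; exact flipIdx_flip_flip hNe a
    · intro a _; exact flipIdx_flip_flip hNe a
    · intro a _; rfl
  -- put it together
  unfold Prob
  rw [Finset.sum_congr rfl hpt, ← Finset.sum_div, Finset.sum_add_distrib, hbij,
    Finset.sum_filter_add_sum_filter_not, htot]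

end
end
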